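/- Let d ≥ 1, let ρ > 0 and γ > 0 satisfy γρ < 1, and let g : ℝ^d → ℝ be ρ-weakly convex (in particular g is finite everywhere). Then the complement of the image of the proximal operator is Lebesgue-negligible: the Lebesgue measure of ℝ^d ∖ Prox_{γg}(ℝ^d) is zero. In particular the Lebesgue measure of Conv(Prox_{γg}(ℝ^d)) ∖ Prox_{γg}(ℝ^d) is zero, where Conv denotes the convex hull. -/

import Mathlib

open scoped RealInnerProductSpace

lemma exists_subgradient_aux (d : ℕ) (h : EuclideanSpace ℝ (Fin d) → ℝ)
    (hc : ConvexOn ℝ Set.univ h) (y : EuclideanSpace ℝ (Fin d)) :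
    ∃ w : EuclideanSpace ℝ (Fin d), ∀ z, h y + ⟪w, z - y⟫ ≤ h z := by
  have hcont : Continuous h := by
    rw [← continuousOn_univ]
    exact hc.continuousOn isOpen_univ
  set S : Set (EuclideanSpace ℝ (Fin d) × ℝ) := {p | h p.1 < p.2} with hS
  have hSopen : IsOpen S := isOpen_lt (hcont.comp continuous_fst) continuous_snd
  have hSconv : Convex ℝ S := by
    intro p hp q hq a b ha hb hab
    simp only [hS, Set.mem_setOf_eq] at hp hq ⊢
    have h1 := hc.2 (Set.mem_univ p.1) (Set.mem_univ q.1) ha hb hab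
    simp only [smul_eq_mul] at h1
    have h2 : (a • p + b • q).1 = a • p.1 + b • q.1 := rfl
    have h3 : (a • p + b • q).2 = a * p.2 + b * q.2 := rfl
    rw [h2, h3]
    have key : a * h p.1 + b * h q.1 < a * p.2 + b * q.2 := by
      rcases ha.lt_or_eq with ha' | ha'
      · have t1 := mul_lt_mul_of_pos_left hp ha'
        have t2 := mul_le_mul_of_nonneg_left hq.le hb
        linarith
      · have hb1 : b = 1 := by linarith
        rw [← ha', hb1]; simpa using hq
    exact lt_of_le_of_lt h1 key
  have hy : ((y, h y) : EuclideanSpace ℝ (Fin d) × ℝ) ∉ S := by simp [hS]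
  obtain ⟨f, hf⟩ := geometric_hahn_banach_open_point hSconv hSopen hy
  set c : ℝ := f (0, 1) with hcdef
  have hsplit : ∀ (z : EuclideanSpace ℝ (Fin d)) (t : ℝ), f (z, t) = f (z, 0) + t * c := by
    intro z t
    have : ((z, t) : EuclideanSpace ℝ (Fin d) × ℝ) = (z, 0) + t • (0, 1) := by
      simp [Prod.ext_iff]
    rw [this, map_add, map_smul]
    simp [hcdef, smul_eq_mul]
  have hcneg : c < 0 := by
    have := hf (y, h y + 1) (by simp [hS])
    rw [hsplit y (h y + 1), hsplit y (h y)] at this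
    linarith
  have key : ∀ z, f (z, 0) + h z * c ≤ f (y, 0) + h y * c := by
    intro z
    by_contra hlt
    push_neg at hlt
    set ε : ℝ := (f (z, 0) + h z * c - (f (y, 0) + h y * c)) / (-c) with hε
    have hε0 : 0 < ε := div_pos (by linarith) (by linarith)
    have h5 := hf (z, h z + ε) (by simp [hS]; linarith)
    rw [hsplit z (h z + ε), hsplit y (h y)] at h5
    have hεc : ε * (-c) = f (z, 0) + h z * c - (f (y, 0) + h y * c) := by
      rw [hε, div_mul_cancel₀ _ (by linarith : (-c) ≠ 0)]
    nlinarith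
  refine ⟨(InnerProductSpace.toDual ℝ (EuclideanSpace ℝ (Fin d))).symm
    ((-c)⁻¹ • (f.comp (ContinuousLinearMap.inl ℝ (EuclideanSpace ℝ (Fin d)) ℝ))), fun z => ?_⟩
  rw [InnerProductSpace.toDual_symm_apply]
  have hval : ((-c)⁻¹ • (f.comp (ContinuousLinearMap.inl ℝ (EuclideanSpace ℝ (Fin d)) ℝ))) (z - y)
      = (-c)⁻¹ * (f (z, 0) - f (y, 0)) := by
    have hzy : ((z - y, 0) : EuclideanSpace ℝ (Fin d) × ℝ) = (z, 0) - (y, 0) := by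
      simp [Prod.ext_iff]
    simp only [ContinuousLinearMap.smul_apply, ContinuousLinearMap.comp_apply,
      ContinuousLinearMap.inl_apply, hzy, map_sub, smul_eq_mul]
    ring
  rw [hval]
  have hc' : (0 : ℝ) < -c := by linarith
  have hk := key z
  rw [inv_mul_eq_div]
  have hdiv : (f (z, 0) - f (y, 0)) / (-c) ≤ h z - h y := by
    rw [div_le_iff₀ hc']
    nlinarith
  linarith
/-- For `g : ℝ^d → ℝ` ρ-weakly convex (finite everywhere) with `γρ < 1`,
the complement of the image of the proximal operator is Lebesgue-null; in particular
the convex hull of the image minus the image is Lebesgue-null. -/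
theorem prox_image_almost_all (d : ℕ) (hd : 1 ≤ d) (ρ γ : ℝ)
    (hρ : 0 < ρ) (hγ : 0 < γ) (hγρ : γ * ρ < 1)
    (g : EuclideanSpace ℝ (Fin d) → ℝ)
    (hweak : ConvexOn ℝ Set.univ (fun x => g x + ρ / 2 * ‖x‖ ^ 2))
    (prox : EuclideanSpace ℝ (Fin d) → EuclideanSpace ℝ (Fin d))
    (hprox : ∀ x y : EuclideanSpace ℝ (Fin d),
      1 / (2 * γ) * ‖x - prox x‖ ^ 2 + g (prox x)
        ≤ 1 / (2 * γ) * ‖x - y‖ ^ 2 + g y) :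
    MeasureTheory.volume (Set.range prox)ᶜ = 0 ∧
    MeasureTheory.volume (convexHull ℝ (Set.range prox) \ Set.range prox) = 0 := by
  have hsurj : Function.Surjective prox := by
    intro y
    obtain ⟨w, hw⟩ := exists_subgradient_aux d (fun x => g x + ρ / 2 * ‖x‖ ^ 2) hweak y
    set v : EuclideanSpace ℝ (Fin d) := w - ρ • y with hv
    set x : EuclideanSpace ℝ (Fin d) := y + γ • v with hx
    refine ⟨x, ?_⟩
    -- subgradient inequality for g
    have sub : ∀ z, g y + ⟪v, z - y⟫ - ρ / 2 * ‖z - y‖ ^ 2 ≤ g z := by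
      intro z
      have h1 := hw z
      have expand : ‖z‖ ^ 2 = ‖y‖ ^ 2 + 2 * ⟪y, z - y⟫ + ‖z - y‖ ^ 2 := by
        have := norm_add_sq_real y (z - y)
        rwa [show y + (z - y) = z by abel] at this
      have hvin : ⟪v, z - y⟫ = ⟪w, z - y⟫ - ρ * ⟪y, z - y⟫ := by
        rw [hv, inner_sub_left, real_inner_smul_left]
      have e2 : ρ / 2 * ‖z‖ ^ 2
          = ρ / 2 * ‖y‖ ^ 2 + ρ * ⟪y, z - y⟫ + ρ / 2 * ‖z - y‖ ^ 2 := by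
        rw [expand]; ring
      rw [hvin]
      linarith
    set p : EuclideanSpace ℝ (Fin d) := prox x with hp
    have hxy := hprox x y
    -- expand the norms
    have hxminusy : x - y = γ • v := by rw [hx]; abel
    have hxminusp : x - p = γ • v + (y - p) := by rw [hx]; abel
    have hexp : ‖x - p‖ ^ 2 = ‖γ • v‖ ^ 2 - 2 * (γ * ⟪v, p - y⟫) + ‖p - y‖ ^ 2 := by
      rw [hxminusp, norm_add_sq_real, real_inner_smul_left]
      have h2 : ⟪v, y - p⟫ = -⟪v, p - y⟫ := by
        rw [show y - p = -(p - y) by abel, inner_neg_right]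
      rw [h2, norm_sub_rev]
      ring
    rw [hxminusy] at hxy
    rw [hexp] at hxy
    set B : ℝ := ‖p - y‖ ^ 2 with hB
    set I : ℝ := ⟪v, p - y⟫ with hI
    set N : ℝ := ‖γ • v‖ ^ 2 with hN
    -- hxy : 1/(2γ) * (N - 2*(γ*I) + B) + g p ≤ 1/(2γ) * N + g y
    have e1 : 1 / (2 * γ) * (N - 2 * (γ * I) + B) = 1 / (2 * γ) * N - I + 1 / (2 * γ) * B := by
      field_simp
    rw [e1] at hxy
    have hsubp := sub p
    -- hsubp : g y + I - ρ/2 * B ≤ g p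
    have hBnn : 0 ≤ B := by rw [hB]; positivity
    have hcoef : 0 < 1 / (2 * γ) - ρ / 2 := by
      rw [sub_pos, div_lt_div_iff₀ (by norm_num) (by linarith)]
      nlinarith
    have hB0 : B = 0 := by nlinarith
    have : ‖p - y‖ = 0 := by
      have := hB0
      rw [hB] at this
      exact pow_eq_zero_iff (by norm_num) |>.mp this
    have : p = y := by
      rwa [norm_sub_eq_zero_iff] at this
    exact this
  have hrange : Set.range prox = Set.univ := Set.range_eq_univ.mpr hsurj
  rw [hrange]
  constructor
  · simp
  · simp [convexHull_univ]
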